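/- Let N ≥ 1 and let ψ_1, …, ψ_N be unit vectors in ℂ^d such that |⟨ψ_i, ψ_j⟩| < 1 for all i ≠ j. Then there exists k₀ ∈ ℕ such that for every k ≥ k₀, the N×N matrix with entries ⟨ψ_i, ψ_j⟩^k is positive definite. -/

import Mathlib

open Matrix
open scoped ComplexOrder

theorem stmt_10 {d N : ℕ} (hN : 1 ≤ N) (ψ : Fin N → (Fin d → ℂ))
    (hψ : ∀ i, star (ψ i) ⬝ᵥ ψ i = 1)
    (hover : ∀ i j, i ≠ j → ‖star (ψ i) ⬝ᵥ ψ j‖ < 1) :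
    ∃ k₀ : ℕ, ∀ k ≥ k₀,
      (Matrix.of (fun i j => (star (ψ i) ⬝ᵥ ψ j) ^ k) :
        Matrix (Fin N) (Fin N) ℂ).PosDef := by
  set G : Fin N → Fin N → ℂ := fun i j => star (ψ i) ⬝ᵥ ψ j with hGdef
  have hsym : ∀ i j, star (G j i) = G i j := by
    intro i j
    simp only [hGdef]
    rw [star_dotProduct]
    simp
  set ε : ℝ := 1 / (2 * N) with hε
  have hεpos : 0 < ε := by
    have : (0:ℝ) < N := by exact_mod_cast hN
    positivity
  -- eventually all off-diagonal norms^k are ≤ ε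
  have hev : ∀ᶠ k in Filter.atTop, ∀ i j : Fin N, i ≠ j → ‖G i j‖ ^ k ≤ ε := by
    rw [Filter.eventually_all]
    intro i
    rw [Filter.eventually_all]
    intro j
    by_cases hij : i = j
    · filter_upwards with k h; exact absurd hij h
    · have htend : Filter.Tendsto (fun k : ℕ => ‖G i j‖ ^ k) Filter.atTop (nhds 0) :=
        tendsto_pow_atTop_nhds_zero_of_lt_one (norm_nonneg _) (hover i j hij)
      filter_upwards [htend.eventually_le_const hεpos] with k hk _
      exact hk
  obtain ⟨k₀, hk₀⟩ := Filter.eventually_atTop.1 hev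
  refine ⟨k₀, fun k hk => ?_⟩
  have hbound := hk₀ k hk
  have hGii : ∀ i, G i i = 1 := hψ
  have hMsym : ∀ i j, star ((G j i) ^ k) = (G i j) ^ k := by
    intro i j; rw [star_pow, hsym]
  rw [posDef_iff_dotProduct_mulVec]
  constructor
  · ext i j
    simp only [conjTranspose_apply, of_apply]
    exact hMsym i j
  · intro x hx
    have hS : star x ⬝ᵥ ((Matrix.of fun i j => G i j ^ k) *ᵥ x)
        = ∑ i, ∑ j, star (x i) * (G i j ^ k * x j) := by
      simp [dotProduct, mulVec, Finset.mul_sum]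
    set S : ℂ := ∑ i, ∑ j, star (x i) * (G i j ^ k * x j) with hSdef
    rw [hS]
    -- imaginary part is zero
    have hstarS : star S = S := by
      rw [hSdef]
      simp only [star_sum, star_mul', star_star, star_pow, hsym]
      rw [Finset.sum_comm]
      refine Finset.sum_congr rfl fun i _ => Finset.sum_congr rfl fun j _ => by ring
    have him : S.im = 0 := by
      have := congrArg Complex.im hstarS
      simp only [Complex.star_def, Complex.conj_im] at this
      linarith
    -- real part estimate
    have hre : (1/2 : ℝ) * ∑ i, ‖x i‖ ^ 2 ≤ S.re := by
      have hterm : ∀ i, (∑ j, star (x i) * (G i j ^ k * x j)).re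
          ≥ ‖x i‖ ^ 2 - ∑ j ∈ Finset.univ.erase i, ε * (‖x i‖ * ‖x j‖) := by
        intro i
        rw [← Finset.add_sum_erase _ _ (Finset.mem_univ i)]
        have hdiag : (star (x i) * (G i i ^ k * x i)).re = ‖x i‖ ^ 2 := by
          rw [hGii i, one_pow, one_mul, Complex.star_def, mul_comm, Complex.mul_conj]
          simp [Complex.normSq_eq_norm_sq, ← Complex.ofReal_pow]
        have hoff : ∀ j ∈ Finset.univ.erase i,
            -(ε * (‖x i‖ * ‖x j‖)) ≤ (star (x i) * (G i j ^ k * x j)).re := by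
          intro j hj
          have hij : j ≠ i := Finset.ne_of_mem_erase hj
          have h1 : |(star (x i) * (G i j ^ k * x j)).re|
              ≤ ‖star (x i) * (G i j ^ k * x j)‖ := Complex.abs_re_le_norm _
          have h2 : ‖star (x i) * (G i j ^ k * x j)‖ ≤ ε * (‖x i‖ * ‖x j‖) := by
            rw [norm_mul, norm_mul, norm_star, norm_pow]
            have hb := hbound i j (Ne.symm hij)
            calc ‖x i‖ * (‖G i j‖ ^ k * ‖x j‖)
                ≤ ‖x i‖ * (ε * ‖x j‖) := by
                  apply mul_le_mul_of_nonneg_left _ (norm_nonneg _)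
                  exact mul_le_mul_of_nonneg_right hb (norm_nonneg _)
              _ = ε * (‖x i‖ * ‖x j‖) := by ring
          nlinarith [neg_abs_le ((star (x i) * (G i j ^ k * x j)).re)]
        calc ((star (x i) * (G i i ^ k * x i)) + ∑ j ∈ Finset.univ.erase i,
              star (x i) * (G i j ^ k * x j)).re
            = (star (x i) * (G i i ^ k * x i)).re
              + ∑ j ∈ Finset.univ.erase i, (star (x i) * (G i j ^ k * x j)).re := by
              rw [Complex.add_re, Complex.re_sum]
          _ ≥ ‖x i‖ ^ 2 + ∑ j ∈ Finset.univ.erase i, -(ε * (‖x i‖ * ‖x j‖)) := by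
              gcongr
              · exact hdiag.ge
              · exact hoff _ ‹_›
          _ = ‖x i‖ ^ 2 - ∑ j ∈ Finset.univ.erase i, ε * (‖x i‖ * ‖x j‖) := by
              rw [Finset.sum_neg_distrib]; ring
      have hSre : S.re = ∑ i, (∑ j, star (x i) * (G i j ^ k * x j)).re := by
        rw [hSdef, Complex.re_sum]
      rw [hSre]
      have h1 : ∑ i, (∑ j, star (x i) * (G i j ^ k * x j)).re
          ≥ ∑ i, (‖x i‖ ^ 2 - ∑ j ∈ Finset.univ.erase i, ε * (‖x i‖ * ‖x j‖)) := by
        apply Finset.sum_le_sum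
        intro i _
        exact hterm i
      have h2 : ∑ i, ∑ j ∈ Finset.univ.erase i, ε * (‖x i‖ * ‖x j‖)
          ≤ ε * (∑ i, ‖x i‖) ^ 2 := by
        calc ∑ i, ∑ j ∈ Finset.univ.erase i, ε * (‖x i‖ * ‖x j‖)
            ≤ ∑ i : Fin N, ∑ j : Fin N, ε * (‖x i‖ * ‖x j‖) := by
              apply Finset.sum_le_sum
              intro i _
              apply Finset.sum_le_sum_of_subset_of_nonneg (Finset.erase_subset _ _)
              intro j _ _
              positivity
          _ = ε * (∑ i, ‖x i‖) ^ 2 := by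
              rw [sq, Finset.sum_mul_sum, Finset.mul_sum]
              congr 1; ext i
              rw [Finset.mul_sum]
      have h3 : (∑ i, ‖x i‖) ^ 2 ≤ N * ∑ i, ‖x i‖ ^ 2 := by
        have := sq_sum_le_card_mul_sum_sq (s := (Finset.univ : Finset (Fin N)))
          (f := fun i => ‖x i‖)
        simpa using this
      have hNpos : (0:ℝ) < N := by exact_mod_cast hN
      have hεN : ε * (N : ℝ) = 1/2 := by
        rw [hε]
        field_simp
      have h4 : ε * (∑ i, ‖x i‖) ^ 2 ≤ (1/2) * ∑ i, ‖x i‖ ^ 2 := by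
        calc ε * (∑ i, ‖x i‖) ^ 2 ≤ ε * (N * ∑ i, ‖x i‖ ^ 2) :=
              mul_le_mul_of_nonneg_left h3 hεpos.le
          _ = (ε * N) * ∑ i, ‖x i‖ ^ 2 := by ring
          _ = (1/2) * ∑ i, ‖x i‖ ^ 2 := by rw [hεN]
      have h5 : ∑ i, (‖x i‖ ^ 2 - ∑ j ∈ Finset.univ.erase i, ε * (‖x i‖ * ‖x j‖))
          = (∑ i, ‖x i‖ ^ 2) - ∑ i, ∑ j ∈ Finset.univ.erase i, ε * (‖x i‖ * ‖x j‖) := by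
        rw [Finset.sum_sub_distrib]
      linarith
    have hxpos : 0 < ∑ i, ‖x i‖ ^ 2 := by
      have hne : ∃ i, x i ≠ 0 := by
        by_contra h
        push_neg at h
        exact hx (funext h)
      obtain ⟨i, hi⟩ := hne
      apply Finset.sum_pos' (fun j _ => by positivity)
      exact ⟨i, Finset.mem_univ i, pow_pos (norm_pos_iff.mpr hi) 2⟩
    rw [Complex.lt_def]
    constructor
    · simp only [Complex.zero_re]
      nlinarith
    · simp [him]
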